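/- Let m ≥ 1 be a natural number. For every finitely supported function u : ℤ → ℂ with u(n) = 0 for all n ≤ 2m (in particular u vanishes at 0,1,...,2m and on all negative integers), one has ∑_{n=1}^{∞} |(D Δ^m u)(n)|² ≥ 2^{2m−2} (2m)! · ∑_{n=1}^{∞} |u(n)|²/n^{4m+2}, where (Du)(n) = u(n) − u(n−1) is the discrete derivative, Δ is the discrete Laplacian (Δu)(n) = 2u(n) − u(n+1) − u(n−1), and Δ^m is its m-fold composition. -/

import Mathlib

open scoped BigOperators

/-- The discrete Laplacian `(Δu)(n) = 2u(n) - u(n+1) - u(n-1)`. -/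
def discreteLaplacian (u : ℤ → ℂ) : ℤ → ℂ :=
  fun n => 2 * u n - u (n + 1) - u (n - 1)

/-- The discrete derivative `(Du)(n) = u(n) - u(n-1)`. -/
def discreteDeriv (u : ℤ → ℂ) : ℤ → ℂ :=
  fun n => u n - u (n - 1)

open Finset

lemma lap_eq (u : ℤ → ℂ) (n : ℤ) :
    discreteLaplacian u n = -(discreteDeriv (discreteDeriv u) (n+1)) := by
  simp only [discreteLaplacian, discreteDeriv]
  have h1 : n + 1 - 1 = n := by ring
  rw [h1]; ring

lemma deriv_of_eq {v w : ℤ → ℂ} {j : ℕ} {c : ℤ} {e : ℂ}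
    (h : ∀ x, v x = e * (discreteDeriv^[j] w) (x + c)) :
    ∀ x, discreteDeriv v x = e * (discreteDeriv^[j+1] w) (x + c) := by
  intro x
  have h1 : discreteDeriv^[j+1] w = discreteDeriv (discreteDeriv^[j] w) :=
    Function.iterate_succ_apply' _ _ _
  have h2 : x - 1 + c = x + c - 1 := by ring
  rw [h1]
  show v x - v (x-1) = e * ((discreteDeriv^[j] w) (x+c) - (discreteDeriv^[j] w) (x+c-1))
  rw [h x, h (x-1), h2]; ring

lemma lap_iter (u : ℤ → ℂ) (m : ℕ) :
    ∀ n : ℤ, (discreteLaplacian^[m] u) n = (-1)^m * (discreteDeriv^[2*m] u) (n + m) := by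
  induction m with
  | zero => intro n; simp
  | succ k ih =>
    have hD1 := deriv_of_eq (w := u) ih
    have hD2 := deriv_of_eq (w := u) hD1
    intro n
    rw [Function.iterate_succ_apply', lap_eq, hD2 (n+1)]
    have h3 : 2*(k+1) = 2*k+1+1 := by ring
    have h4 : n + ((k:ℤ)+1) = n+1+(k:ℤ) := by ring
    rw [h3]
    push_cast
    rw [h4]
    ring

lemma DlapIter (u : ℤ → ℂ) (m : ℕ) (n : ℤ) :
    ‖discreteDeriv (discreteLaplacian^[m] u) n‖ = ‖(discreteDeriv^[2*m+1] u) (n + m)‖ := by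
  have h := deriv_of_eq (w := u) (lap_iter u m)
  rw [h n, norm_mul, norm_pow, norm_neg, norm_one, one_pow, one_mul]

lemma supp_lower (u : ℤ → ℂ) (c : ℤ) (h : ∀ n, n ≤ c → u n = 0) :
    ∀ (j : ℕ) (n : ℤ), n ≤ c → (discreteDeriv^[j] u) n = 0 := by
  intro j
  induction j with
  | zero => exact h
  | succ k ih =>
    intro n hn
    rw [Function.iterate_succ_apply']
    show (discreteDeriv^[k] u) n - (discreteDeriv^[k] u) (n-1) = 0
    rw [ih n hn, ih (n-1) (by omega)]; ring

lemma supp_upper (u : ℤ → ℂ) (M : ℤ) (h : ∀ n, M ≤ n → u n = 0) :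
    ∀ (j : ℕ) (n : ℤ), M + j ≤ n → (discreteDeriv^[j] u) n = 0 := by
  intro j
  induction j with
  | zero => intro n hn; exact h n (by omega)
  | succ k ih =>
    intro n hn
    rw [Function.iterate_succ_apply']
    show (discreteDeriv^[k] u) n - (discreteDeriv^[k] u) (n-1) = 0
    push_cast at hn ⊢
    rw [ih n (by omega), ih (n-1) (by omega)]; ring

lemma real_pair (x y r : ℝ) (hr : 0 < r) :
    (1-r)*x^2 + (1-1/r)*y^2 ≤ (x-y)^2 := by
  have h2 : (1-r)*x^2 + (1-1/r)*y^2 = (x-y)^2 - (r*x-y)^2/r := by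
    field_simp; ring
  have h3 : 0 ≤ (r*x-y)^2/r := by positivity
  linarith

lemma norm_pair (a b : ℂ) (r : ℝ) (hr : 0 ≤ r) (hb : r = 0 → b = 0) :
    (1-r)*‖a‖^2 + (1-1/r)*‖b‖^2 ≤ ‖a - b‖^2 := by
  rcases eq_or_lt_of_le hr with h | h
  · rw [← h, hb h.symm]
    simp
  · have key : (‖a‖-‖b‖)^2 ≤ ‖a-b‖^2 := by
      have h1 := abs_norm_sub_norm_le a b
      have h2 := abs_nonneg (‖a‖-‖b‖)
      nlinarith [sq_abs (‖a‖-‖b‖)]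
    calc (1-r)*‖a‖^2 + (1-1/r)*‖b‖^2 ≤ (‖a‖-‖b‖)^2 := real_pair _ _ _ h
    _ ≤ ‖a-b‖^2 := key

lemma hardy_step (N K : ℤ) (v : ℤ → ℂ) (w g : ℤ → ℝ)
    (hvN : ∀ n, n < N → v n = 0) (hvK : v K = 0)
    (hg : ∀ n, N ≤ n → 0 < g n) (hg0 : 0 ≤ g (N-1))
    (hw : ∀ n, N ≤ n → 0 ≤ w n) :
    ∑ n ∈ Finset.Icc N K, (w n * (1 - g (n-1)/g n) + w (n+1) * (1 - g (n+1)/g n)) * ‖v n‖^2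
      ≤ ∑ n ∈ Finset.Icc N K, w n * ‖v n - v (n-1)‖^2 := by
  set F : ℤ → ℝ := fun n => w n * (1 - g n / g (n-1)) * ‖v (n-1)‖^2 with hF
  -- split the left sum
  have split : ∑ n ∈ Finset.Icc N K, (w n * (1 - g (n-1)/g n) + w (n+1) * (1 - g (n+1)/g n)) * ‖v n‖^2
      = ∑ n ∈ Finset.Icc N K, w n * (1 - g (n-1)/g n) * ‖v n‖^2
        + ∑ n ∈ Finset.Icc N K, F (n+1) := by
    rw [← Finset.sum_add_distrib]
    apply Finset.sum_congr rfl
    intro n _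
    have h1 : n + 1 - 1 = n := by ring
    simp only [hF, h1]
    ring
  -- shift the second sum
  have shift : ∑ n ∈ Finset.Icc N K, F (n+1) = ∑ n ∈ Finset.Icc (N+1) (K+1), F n := by
    rw [← Finset.map_add_right_Icc N K 1, Finset.sum_map]
    apply Finset.sum_congr rfl
    intro n _
    simp [addRightEmbedding_apply]
  have FN : F N = 0 := by
    simp only [hF, hvN (N-1) (by omega)]
    simp
  have FK : F (K+1) = 0 := by
    have h1 : K + 1 - 1 = K := by ring
    simp only [hF, h1, hvK]
    simp
  have eq1 : ∑ n ∈ Finset.Icc (N+1) (K+1), F n = ∑ n ∈ Finset.Icc N (K+1), F n := by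
    apply Finset.sum_subset (Finset.Icc_subset_Icc (by omega) le_rfl)
    intro x hx hx'
    simp only [Finset.mem_Icc] at hx hx'
    have : x = N := by omega
    rw [this]; exact FN
  have eq2 : ∑ n ∈ Finset.Icc N K, F n = ∑ n ∈ Finset.Icc N (K+1), F n := by
    apply Finset.sum_subset (Finset.Icc_subset_Icc le_rfl (by omega))
    intro x hx hx'
    simp only [Finset.mem_Icc] at hx hx'
    have : x = K+1 := by omega
    rw [this]; exact FK
  rw [split, shift, eq1, ← eq2, ← Finset.sum_add_distrib]
  apply Finset.sum_le_sum
  intro n hn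
  simp only [Finset.mem_Icc] at hn
  set r : ℝ := g (n-1) / g n with hr
  have hgn : 0 < g n := hg n hn.1
  have hgm : 0 ≤ g (n-1) := by
    rcases eq_or_lt_of_le hn.1 with h | h
    · rw [← h]; exact hg0
    · exact (hg (n-1) (by omega)).le
  have hrpos : 0 ≤ r := div_nonneg hgm hgn.le
  have hbz : r = 0 → v (n-1) = 0 := by
    intro h
    rcases div_eq_zero_iff.mp h with h' | h'
    · by_cases hcase : N ≤ n - 1
      · exact absurd h' (hg (n-1) hcase).ne'
      · exact hvN (n-1) (by omega)
    · exact absurd h' hgn.ne'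
  have key := norm_pair (v n) (v (n-1)) r hrpos hbz
  have hinv : 1/r = g n / g (n-1) := by
    rw [hr, one_div, inv_div]
  have expand : w n * (1 - g (n-1)/g n) * ‖v n‖^2 + F n
      = w n * ((1-r)*‖v n‖^2 + (1-1/r)*‖v (n-1)‖^2) := by
    rw [hinv, hF]; ring
  rw [expand]
  exact mul_le_mul_of_nonneg_left key (hw n hn.1)

lemma sqrt_prod_le (t : ℝ) (ht : 1 ≤ t) :
    Real.sqrt (t-1) * Real.sqrt (t+1) ≤ t - 1/(2*(t+1)) := by
  rw [← Real.sqrt_mul (by linarith)]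
  have h1 : (0:ℝ) ≤ t - 1/(2*(t+1)) := by
    have : 1/(2*(t+1)) ≤ 1 := by
      rw [div_le_one (by linarith)]; linarith
    linarith
  have h2 : (t-1)*(t+1) ≤ (t - 1/(2*(t+1)))^2 := by
    have hpos : (0:ℝ) < t + 1 := by linarith
    have expand : (t - 1/(2*(t+1)))^2 = t^2 - t/(t+1) + 1/(4*(t+1)^2) := by
      field_simp; ring
    have h3 : t/(t+1) ≤ 1 := by rw [div_le_one hpos]; linarith
    have h4 : (0:ℝ) ≤ 1/(4*(t+1)^2) := by positivity
    nlinarith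
  calc Real.sqrt ((t-1)*(t+1)) ≤ Real.sqrt ((t - 1/(2*(t+1)))^2) := Real.sqrt_le_sqrt h2
  _ = t - 1/(2*(t+1)) := Real.sqrt_sq h1

lemma base_analytic (t : ℝ) (ht : 1 ≤ t) :
    1/4 * (t*(t+1))⁻¹ ≤ (1 - Real.sqrt (t-1)/Real.sqrt t) + (1 - Real.sqrt (t+1)/Real.sqrt t) := by
  set a := Real.sqrt (t-1) with ha
  set b := Real.sqrt (t+1) with hb
  set s := Real.sqrt t with hs
  have hspos : 0 < s := Real.sqrt_pos.mpr (by linarith)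
  have has : 0 ≤ a := Real.sqrt_nonneg _
  have hbs : 0 ≤ b := Real.sqrt_nonneg _
  have ha2 : a^2 = t - 1 := Real.sq_sqrt (by linarith)
  have hb2 : b^2 = t + 1 := Real.sq_sqrt (by linarith)
  have hs2 : s^2 = t := Real.sq_sqrt (by linarith)
  have hab : a*b ≤ t - 1/(2*(t+1)) := sqrt_prod_le t ht
  set q : ℝ := 1/(4*t*(t+1)) with hq
  have hqpos : 0 < q := by positivity
  have hq1 : q ≤ 1/8 := by
    rw [hq]
    rw [div_le_div_iff₀ (by positivity) (by norm_num)]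
    nlinarith
  -- key : a + b ≤ s * (2 - q)
  have hsq : (a+b)^2 ≤ (s*(2-q))^2 := by
    have e1 : (a+b)^2 = 2*t + 2*(a*b) := by nlinarith [ha2, hb2]
    have e2 : (s*(2-q))^2 = 4*t - 4*t*q + t*q^2 := by
      have : s^2 = t := hs2
      nlinarith [this]
    have e3 : 4*t*q = 1/(t+1) := by
      rw [hq]; field_simp
    have e4 : (0:ℝ) ≤ t*q^2 := by positivity
    have e5 : 2*(1/(2*(t+1))) = 1/(t+1) := by
      field_simp
    linarith
  have key : a + b ≤ s * (2 - q) := by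
    have hR : 0 ≤ s*(2-q) := by nlinarith
    nlinarith [hsq, hR, has, hbs]
  -- conclude
  have goal2 : a/s + b/s ≤ 2 - q := by
    rw [← add_div, div_le_iff₀ hspos]
    calc a + b ≤ s*(2-q) := key
    _ = (2-q)*s := by ring
  have hqe : q = 1/4 * (t*(t+1))⁻¹ := by rw [hq]; field_simp
  linarith [goal2, hqe ▸ goal2]

lemma prod_pos_aux (t : ℝ) (ht : 1 ≤ t) (k : ℕ) : 0 < ∏ j ∈ range k, (t + (j:ℝ)) := by
  apply Finset.prod_pos
  intro j _
  have : (0:ℝ) ≤ j := Nat.cast_nonneg j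
  linarith

lemma tele (t : ℝ) (ht : 1 ≤ t) (k : ℕ) :
    (∏ j ∈ range k, (t+(j:ℝ)))⁻¹ - (∏ j ∈ range k, (t+1+(j:ℝ)))⁻¹
      = k * (∏ j ∈ range (k+1), (t+(j:ℝ)))⁻¹ := by
  have hA : 0 < ∏ j ∈ range k, (t + (j:ℝ)) := prod_pos_aux t ht k
  have hB : 0 < ∏ j ∈ range k, (t + 1 + (j:ℝ)) := by
    have := prod_pos_aux (t+1) (by linarith) k
    convert this using 2
  have hP1 : ∏ j ∈ range (k+1), (t+(j:ℝ)) = (∏ j ∈ range k, (t+1+(j:ℝ))) * t := by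
    rw [Finset.prod_range_succ']
    congr 1
    · apply Finset.prod_congr rfl; intro j _; push_cast; ring
    · norm_num
  have hP2 : ∏ j ∈ range (k+1), (t+(j:ℝ)) = (∏ j ∈ range k, (t+(j:ℝ))) * (t+k) := by
    rw [Finset.prod_range_succ]
  rw [hP1]
  have htpos : 0 < t := by linarith
  have hne1 : (∏ j ∈ range k, (t + (j:ℝ))) ≠ 0 := ne_of_gt hA
  have hne2 : (∏ j ∈ range k, (t + 1 + (j:ℝ))) ≠ 0 := ne_of_gt hB
  field_simp
  -- goal should follow from hP1 = hP2 identity : t * B = A * (t+k)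
  have hid : (∏ j ∈ range k, (t+1+(j:ℝ))) * t = (∏ j ∈ range k, (t+(j:ℝ))) * (t+k) := by
    rw [← hP1, hP2]
  nlinarith [hid]

lemma centered (k : ℕ) : ∀ x : ℝ, (k:ℝ)+1 ≤ x →
    ∏ j ∈ range (2*k+1), (x - k + (j:ℝ)) ≤ x^(2*k+1) := by
  induction k with
  | zero => intro x hx; simpa using le_refl x
  | succ k ih =>
    intro x hx
    have h1 : 2*(k+1)+1 = (2*k+2)+1 := by ring
    rw [h1, Finset.prod_range_succ]
    have h2 : ∏ j ∈ range (2*k+2), (x - (k+1:ℕ) + (j:ℝ))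
        = (x - ((k:ℝ)+1)) * ∏ j ∈ range (2*k+1), (x - k + (j:ℝ)) := by
      have e1 : ∀ j : ℕ, x - ((k+1:ℕ):ℝ) + ((j+1:ℕ):ℝ) = x - (k:ℝ) + (j:ℝ) := by
        intro j; push_cast; ring
      have e0 : x - ((k+1:ℕ):ℝ) + ((0:ℕ):ℝ) = x - ((k:ℝ)+1) := by push_cast; ring
      rw [Finset.prod_range_succ', e0, Finset.prod_congr rfl (fun j _ => e1 j), mul_comm]
    rw [h2]
    have hxpos : (0:ℝ) < x := by
      have : (0:ℝ) ≤ (k:ℝ)+1+1 := by positivity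
      push_cast at hx; linarith
    have hprodpos : 0 ≤ ∏ j ∈ range (2*k+1), (x - k + (j:ℝ)) := by
      apply Finset.prod_nonneg
      intro j _
      have : (0:ℝ) ≤ (j:ℝ) := Nat.cast_nonneg j
      push_cast at hx ⊢
      linarith
    have hih := ih x (by push_cast at hx ⊢; linarith)
    have hlast : x - ((k+1:ℕ):ℝ) + ((2*k+2:ℕ):ℝ) = x + (k:ℝ) + 1 := by push_cast; ring
    rw [hlast]
    -- goal : (x - (k+1)) * P * (x + k + 1) ≤ x^(2k+3)
    have hfac : (x - ((k:ℝ)+1)) * (x + (k:ℝ) + 1) ≤ x^2 := by nlinarith [sq_nonneg ((k:ℝ)+1)]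
    have hxk : 0 ≤ x - ((k:ℝ)+1) := by push_cast at hx; linarith
    calc (x - ((k:ℝ)+1)) * (∏ j ∈ range (2*k+1), (x - k + (j:ℝ))) * (x + (k:ℝ) + 1)
        = ((x - ((k:ℝ)+1)) * (x + (k:ℝ) + 1)) * (∏ j ∈ range (2*k+1), (x - k + (j:ℝ))) := by ring
      _ ≤ x^2 * x^(2*k+1) := by
          apply mul_le_mul hfac hih hprodpos (by positivity)
      _ = x^(2*k+2+1) := by rw [← pow_add]; congr 1; omega

noncomputable def W (m : ℕ) (i : ℕ) (n : ℤ) : ℝ :=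
  (∏ j ∈ range (2*i), ((n:ℝ) - 2*(m:ℝ) + (j:ℝ)))⁻¹

lemma W_pos (m i : ℕ) (n : ℤ) (hn : 1 ≤ (n:ℝ) - 2*(m:ℝ)) : 0 < W m i n :=
  inv_pos.mpr (prod_pos_aux _ hn _)

-- the mid-chain pointwise bound
lemma rho_mid (t : ℝ) (ht : 1 ≤ t) (i : ℕ) :
    2*(i:ℝ) * (∏ j ∈ range (2*i+2), (t+(j:ℝ)))⁻¹
      ≤ (∏ j ∈ range (2*i), (t+(j:ℝ)))⁻¹ * (1 - (t-1)/t)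
        + (∏ j ∈ range (2*i), (t+1+(j:ℝ)))⁻¹ * (1 - (t+1)/t) := by
  have htpos : (0:ℝ) < t := by linarith
  have h1 : (1 - (t-1)/t) = 1/t := by field_simp; ring
  have h2 : (1 - (t+1)/t) = -(1/t) := by field_simp; ring
  rw [h1, h2]
  have h3 : (∏ j ∈ range (2*i), (t+(j:ℝ)))⁻¹ * (1/t)
      + (∏ j ∈ range (2*i), (t+1+(j:ℝ)))⁻¹ * (-(1/t))
      = ((∏ j ∈ range (2*i), (t+(j:ℝ)))⁻¹ - (∏ j ∈ range (2*i), (t+1+(j:ℝ)))⁻¹) * (1/t) := by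
    ring
  rw [h3, tele t ht (2*i)]
  push_cast
  -- now: 2i * (∏ range (2i+2))⁻¹ ≤ 2i * (∏ range (2i+1))⁻¹ * (1/t)
  have hP1 : 0 < ∏ j ∈ range (2*i+1), (t+(j:ℝ)) := prod_pos_aux t ht _
  have hP2 : 0 < ∏ j ∈ range (2*i+2), (t+(j:ℝ)) := prod_pos_aux t ht _
  have key : t * ∏ j ∈ range (2*i+1), (t+(j:ℝ)) ≤ ∏ j ∈ range (2*i+2), (t+(j:ℝ)) := by
    have e : ∏ j ∈ range (2*i+2), (t+(j:ℝ))
        = (∏ j ∈ range (2*i+1), (t+(j:ℝ))) * (t + ((2*i+1:ℕ):ℝ)) := Finset.prod_range_succ _ _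
    rw [e]
    have hc : (0:ℝ) ≤ ((2*i+1:ℕ):ℝ) := Nat.cast_nonneg _
    nlinarith [mul_nonneg hP1.le hc]
  have hinv : (∏ j ∈ range (2*i+2), (t+(j:ℝ)))⁻¹ ≤ (t * ∏ j ∈ range (2*i+1), (t+(j:ℝ)))⁻¹ := by
    apply inv_anti₀ (by positivity) key
  have hfin : (2*(i:ℝ)) * (∏ j ∈ range (2*i+2), (t+(j:ℝ)))⁻¹
      ≤ (2*(i:ℝ)) * (t * ∏ j ∈ range (2*i+1), (t+(j:ℝ)))⁻¹ := by
    apply mul_le_mul_of_nonneg_left hinv (by positivity)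
  calc 2*(i:ℝ) * (∏ j ∈ range (2*i+2), (t+(j:ℝ)))⁻¹
      ≤ (2*(i:ℝ)) * (t * ∏ j ∈ range (2*i+1), (t+(j:ℝ)))⁻¹ := hfin
    _ = 2*(i:ℝ) * (∏ j ∈ range (2*i+1), (t+(j:ℝ)))⁻¹ * (1/t) := by
        rw [mul_inv]; ring

lemma cast_ge (m : ℕ) (N n : ℤ) (hN : N = 2*(m:ℤ)+1) (hn : N ≤ n) :
    1 ≤ (n:ℝ) - 2*(m:ℝ) := by
  rw [hN] at hn
  have : ((2*(m:ℤ)+1 : ℤ):ℝ) ≤ (n:ℝ) := by exact_mod_cast hn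
  push_cast at this
  linarith

lemma chain_mid (m : ℕ) (N K : ℤ) (hN : N = 2*(m:ℤ)+1) (i : ℕ)
    (v : ℤ → ℂ) (hvN : ∀ n, n < N → v n = 0) (hvK : v K = 0) :
    ∑ n ∈ Finset.Icc N K, (2*(i:ℝ)) * W m (i+1) n * ‖v n‖^2
      ≤ ∑ n ∈ Finset.Icc N K, W m i n * ‖v n - v (n-1)‖^2 := by
  have step := hardy_step N K v (W m i) (fun n => (n:ℝ) - 2*(m:ℝ)) hvN hvK
    (fun n hn => by have := cast_ge m N n hN hn; linarith)
    (by rw [hN]; push_cast; norm_num)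
    (fun n hn => (W_pos m i n (cast_ge m N n hN hn)).le)
  refine le_trans (Finset.sum_le_sum ?_) step
  intro n hn
  simp only [Finset.mem_Icc] at hn
  have ht : 1 ≤ (n:ℝ) - 2*(m:ℝ) := cast_ge m N n hN hn.1
  set t : ℝ := (n:ℝ) - 2*(m:ℝ) with htdef
  apply mul_le_mul_of_nonneg_right _ (by positivity : (0:ℝ) ≤ ‖v n‖^2)
  -- rewrite the three W/g pieces
  have e1 : W m (i+1) n = (∏ j ∈ range (2*i+2), (t+(j:ℝ)))⁻¹ := by
    unfold W
    congr 1
  have e2 : W m i n = (∏ j ∈ range (2*i), (t+(j:ℝ)))⁻¹ := rfl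
  have e3 : W m i (n+1) = (∏ j ∈ range (2*i), (t+1+(j:ℝ)))⁻¹ := by
    unfold W
    congr 1
    apply Finset.prod_congr rfl
    intro j _
    push_cast
    ring
  have e4 : ((n-1 : ℤ):ℝ) - 2*(m:ℝ) = t - 1 := by push_cast; ring
  have e5 : ((n+1 : ℤ):ℝ) - 2*(m:ℝ) = t + 1 := by push_cast; ring
  simp only [e1, e2, e3, e4, e5]
  exact rho_mid t ht i

lemma chain_base (m : ℕ) (N K : ℤ) (hN : N = 2*(m:ℤ)+1)
    (v : ℤ → ℂ) (hvN : ∀ n, n < N → v n = 0) (hvK : v K = 0) :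
    ∑ n ∈ Finset.Icc N K, 4⁻¹ * W m 1 n * ‖v n‖^2
      ≤ ∑ n ∈ Finset.Icc N K, ‖v n - v (n-1)‖^2 := by
  have step := hardy_step N K v (fun _ => (1:ℝ)) (fun n => Real.sqrt ((n:ℝ) - 2*(m:ℝ))) hvN hvK
    (fun n hn => by
      have := cast_ge m N n hN hn
      exact Real.sqrt_pos.mpr (by linarith))
    (Real.sqrt_nonneg _)
    (fun n _ => zero_le_one)
  have rhs_eq : ∑ n ∈ Finset.Icc N K, (fun _ => (1:ℝ)) n * ‖v n - v (n-1)‖^2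
      = ∑ n ∈ Finset.Icc N K, ‖v n - v (n-1)‖^2 := by
    apply Finset.sum_congr rfl
    intro n _; simp
  rw [← rhs_eq]
  refine le_trans (Finset.sum_le_sum ?_) step
  intro n hn
  simp only [Finset.mem_Icc] at hn
  have ht : 1 ≤ (n:ℝ) - 2*(m:ℝ) := cast_ge m N n hN hn.1
  set t : ℝ := (n:ℝ) - 2*(m:ℝ) with htdef
  apply mul_le_mul_of_nonneg_right _ (by positivity : (0:ℝ) ≤ ‖v n‖^2)
  have e1 : W m 1 n = (t*(t+1))⁻¹ := by
    unfold W
    congr 1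
    rw [show 2*1 = 2 from rfl, Finset.prod_range_succ, Finset.prod_range_succ,
      Finset.prod_range_zero]
    push_cast
    ring
  have e4 : ((n-1 : ℤ):ℝ) - 2*(m:ℝ) = t - 1 := by push_cast; ring
  have e5 : ((n+1 : ℤ):ℝ) - 2*(m:ℝ) = t + 1 := by push_cast; ring
  simp only [e1, e4, e5, one_mul]
  have := base_analytic t ht
  calc 4⁻¹ * (t*(t+1))⁻¹ = 1/4 * (t*(t+1))⁻¹ := by norm_num
    _ ≤ _ := this

lemma rho_final (m : ℕ) (hm : 1 ≤ m) (x : ℝ) (hx : 2*(m:ℝ)+1 ≤ x) :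
    4*(m:ℝ) * (x^(4*m+2))⁻¹
      ≤ (∏ j ∈ range (2*(2*m)), ((x - 2*(m:ℝ))+(j:ℝ)))⁻¹ * (1 - ((x - 2*(m:ℝ))-1)/(x - 2*(m:ℝ)))
        + (∏ j ∈ range (2*(2*m)), ((x - 2*(m:ℝ))+1+(j:ℝ)))⁻¹ * (1 - ((x - 2*(m:ℝ))+1)/(x - 2*(m:ℝ))) := by
  set t : ℝ := x - 2*(m:ℝ) with htdef
  have hmr : (1:ℝ) ≤ (m:ℝ) := by exact_mod_cast hm
  have ht : 1 ≤ t := by rw [htdef]; linarith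
  have htpos : (0:ℝ) < t := by linarith
  have h1 : (1 - (t-1)/t) = 1/t := by field_simp; ring
  have h2 : (1 - (t+1)/t) = -(1/t) := by field_simp; ring
  rw [h1, h2]
  have h3 : (∏ j ∈ range (2*(2*m)), (t+(j:ℝ)))⁻¹ * (1/t)
      + (∏ j ∈ range (2*(2*m)), (t+1+(j:ℝ)))⁻¹ * (-(1/t))
      = ((∏ j ∈ range (2*(2*m)), (t+(j:ℝ)))⁻¹ - (∏ j ∈ range (2*(2*m)), (t+1+(j:ℝ)))⁻¹) * (1/t) := by
    ring
  rw [h3, tele t ht (2*(2*m))]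
  -- ∏_{range (4m+1)}(t+j) * t ≤ x^(4m+2)
  have hxpos : (0:ℝ) < x := by linarith
  have hcen := centered (2*m) x (by push_cast; linarith)
  have hprod_eq : ∏ j ∈ range (2*(2*m)+1), (x - ((2*m:ℕ):ℝ) + (j:ℝ))
      = ∏ j ∈ range (2*(2*m)+1), (t+(j:ℝ)) := by
    apply Finset.prod_congr rfl
    intro j _
    rw [htdef]
    push_cast
    ring
  rw [hprod_eq] at hcen
  have hPpos : 0 < ∏ j ∈ range (2*(2*m)+1), (t+(j:ℝ)) := prod_pos_aux t ht _
  have key : t * ∏ j ∈ range (2*(2*m)+1), (t+(j:ℝ)) ≤ x^(4*m+2) := by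
    have htx : t ≤ x := by rw [htdef]; push_cast; linarith [hmr]
    have e : x^(4*m+2) = x * x^(2*(2*m)+1) := by
      rw [← pow_succ']
      congr 1
      omega
    rw [e]
    apply mul_le_mul htx hcen hPpos.le hxpos.le
  have hinv : (x^(4*m+2))⁻¹ ≤ (t * ∏ j ∈ range (2*(2*m)+1), (t+(j:ℝ)))⁻¹ :=
    inv_anti₀ (by positivity) key
  have hc : ((2*(2*m):ℕ):ℝ) = 4*(m:ℝ) := by push_cast; ring
  rw [hc]
  calc 4*(m:ℝ) * (x^(4*m+2))⁻¹
      ≤ 4*(m:ℝ) * (t * ∏ j ∈ range (2*(2*m)+1), (t+(j:ℝ)))⁻¹ := by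
        apply mul_le_mul_of_nonneg_left hinv (by positivity)
    _ = 4*(m:ℝ) * (∏ j ∈ range (2*(2*m)+1), (t+(j:ℝ)))⁻¹ * (1/t) := by
        rw [mul_inv]; ring

lemma chain_final (m : ℕ) (hm : 1 ≤ m) (N K : ℤ) (hN : N = 2*(m:ℤ)+1)
    (v : ℤ → ℂ) (hvN : ∀ n, n < N → v n = 0) (hvK : v K = 0) :
    ∑ n ∈ Finset.Icc N K, (4*(m:ℝ)) * (((n:ℝ))^(4*m+2))⁻¹ * ‖v n‖^2
      ≤ ∑ n ∈ Finset.Icc N K, W m (2*m) n * ‖v n - v (n-1)‖^2 := by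
  have step := hardy_step N K v (W m (2*m)) (fun n => (n:ℝ) - 2*(m:ℝ)) hvN hvK
    (fun n hn => by have := cast_ge m N n hN hn; linarith)
    (by rw [hN]; push_cast; norm_num)
    (fun n hn => (W_pos m (2*m) n (cast_ge m N n hN hn)).le)
  refine le_trans (Finset.sum_le_sum ?_) step
  intro n hn
  simp only [Finset.mem_Icc] at hn
  have ht : 1 ≤ (n:ℝ) - 2*(m:ℝ) := cast_ge m N n hN hn.1
  apply mul_le_mul_of_nonneg_right _ (by positivity : (0:ℝ) ≤ ‖v n‖^2)
  have hx : 2*(m:ℝ)+1 ≤ (n:ℝ) := by linarith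
  have e3 : W m (2*m) (n+1) = (∏ j ∈ range (2*(2*m)), (((n:ℝ) - 2*(m:ℝ))+1+(j:ℝ)))⁻¹ := by
    unfold W
    congr 1
    apply Finset.prod_congr rfl
    intro j _
    push_cast
    ring
  have e4 : ((n-1 : ℤ):ℝ) - 2*(m:ℝ) = ((n:ℝ) - 2*(m:ℝ)) - 1 := by push_cast; ring
  have e5 : ((n+1 : ℤ):ℝ) - 2*(m:ℝ) = ((n:ℝ) - 2*(m:ℝ)) + 1 := by push_cast; ring
  simp only [e3, e4, e5]
  exact rho_final m hm (n:ℝ) hx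

lemma deriv_succ (u : ℤ → ℂ) (j : ℕ) (n : ℤ) :
    (discreteDeriv^[j+1] u) n = (discreteDeriv^[j] u) n - (discreteDeriv^[j] u) (n-1) := by
  rw [Function.iterate_succ_apply']
  rfl

lemma prod_const_fact : ∀ k : ℕ, (∏ l ∈ range k, (2*((l:ℝ)+1))) = 2^k * (Nat.factorial k : ℝ) := by
  intro k
  induction k with
  | zero => simp
  | succ k ih =>
    rw [Finset.prod_range_succ, ih, Nat.factorial_succ]
    push_cast
    ring

theorem core (m : ℕ) (hm : 1 ≤ m) (u : ℤ → ℂ) (N K M : ℤ)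
    (hN : N = 2*(m:ℤ)+1)
    (h0 : ∀ n, n ≤ 2*(m:ℤ) → u n = 0)
    (hupper : ∀ n, M ≤ n → u n = 0)
    (hK : M + 2*(m:ℤ) + 1 ≤ K) :
    (2:ℝ)^(2*(m:ℤ)-2) * (Nat.factorial (2*m)) *
        ∑ n ∈ Finset.Icc N K, (((n:ℝ))^(4*m+2))⁻¹ * ‖u n‖^2
      ≤ ∑ n ∈ Finset.Icc N K, ‖(discreteDeriv^[2*m+1] u) n‖^2 := by
  have hvN : ∀ (j : ℕ) (n : ℤ), n < N → (discreteDeriv^[j] u) n = 0 := by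
    intro j n hn
    exact supp_lower u (2*(m:ℤ)) h0 j n (by omega)
  have hvK : ∀ (j : ℕ), j ≤ 2*m → (discreteDeriv^[j] u) K = 0 := by
    intro j hj
    apply supp_upper u M hupper j K
    have : (j:ℤ) ≤ 2*(m:ℤ) := by exact_mod_cast hj
    omega
  -- the chain
  have chain : ∀ j : ℕ, j ≤ 2*m - 1 →
      (4:ℝ)⁻¹ * (∏ l ∈ range j, (2*((l:ℝ)+1)))
          * ∑ n ∈ Finset.Icc N K, W m (j+1) n * ‖(discreteDeriv^[2*m-j] u) n‖^2
        ≤ ∑ n ∈ Finset.Icc N K, ‖(discreteDeriv^[2*m+1] u) n‖^2 := by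
    intro j
    induction j with
    | zero =>
      intro _
      have hb := chain_base m N K hN (discreteDeriv^[2*m] u) (hvN (2*m)) (hvK (2*m) le_rfl)
      have e : ∀ n : ℤ, ‖(discreteDeriv^[2*m] u) n - (discreteDeriv^[2*m] u) (n-1)‖
          = ‖(discreteDeriv^[2*m+1] u) n‖ := by
        intro n; rw [deriv_succ]
      calc (4:ℝ)⁻¹ * (∏ l ∈ range 0, (2*((l:ℝ)+1)))
            * ∑ n ∈ Finset.Icc N K, W m (0+1) n * ‖(discreteDeriv^[2*m-0] u) n‖^2
          = ∑ n ∈ Finset.Icc N K, 4⁻¹ * W m 1 n * ‖(discreteDeriv^[2*m] u) n‖^2 := by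
            rw [Finset.prod_range_zero, Finset.mul_sum]
            apply Finset.sum_congr rfl
            intro n _
            try simp only [Nat.sub_zero]
            ring
        _ ≤ ∑ n ∈ Finset.Icc N K, ‖(discreteDeriv^[2*m] u) n - (discreteDeriv^[2*m] u) (n-1)‖^2 := hb
        _ = ∑ n ∈ Finset.Icc N K, ‖(discreteDeriv^[2*m+1] u) n‖^2 := by
            apply Finset.sum_congr rfl
            intro n _
            rw [e n]
    | succ j ihj =>
      intro hj
      have hj' : j ≤ 2*m - 1 := by omega
      have ih := ihj hj'
      have hmid := chain_mid m N K hN (j+1) (discreteDeriv^[2*m-(j+1)] u)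
        (hvN (2*m-(j+1))) (hvK (2*m-(j+1)) (by omega))
      have hsub : 2*m - j = (2*m-(j+1)) + 1 := by omega
      have e : ∀ n : ℤ, (discreteDeriv^[2*m-j] u) n
          = (discreteDeriv^[2*m-(j+1)] u) n - (discreteDeriv^[2*m-(j+1)] u) (n-1) := by
        intro n
        rw [hsub, deriv_succ]
      have hC : (0:ℝ) ≤ (4:ℝ)⁻¹ * (∏ l ∈ range j, (2*((l:ℝ)+1))) := by
        apply mul_nonneg (by norm_num)
        apply Finset.prod_nonneg
        intro l _
        positivity
      calc (4:ℝ)⁻¹ * (∏ l ∈ range (j+1), (2*((l:ℝ)+1)))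
            * ∑ n ∈ Finset.Icc N K, W m (j+1+1) n * ‖(discreteDeriv^[2*m-(j+1)] u) n‖^2
          = ((4:ℝ)⁻¹ * (∏ l ∈ range j, (2*((l:ℝ)+1))))
            * ∑ n ∈ Finset.Icc N K, (2*((j:ℝ)+1)) * W m (j+1+1) n * ‖(discreteDeriv^[2*m-(j+1)] u) n‖^2 := by
            rw [Finset.prod_range_succ, Finset.mul_sum, Finset.mul_sum]
            apply Finset.sum_congr rfl
            intro n _
            try simp only [Nat.sub_zero]
            ring
        _ ≤ ((4:ℝ)⁻¹ * (∏ l ∈ range j, (2*((l:ℝ)+1))))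
            * ∑ n ∈ Finset.Icc N K, W m (j+1) n * ‖(discreteDeriv^[2*m-j] u) n‖^2 := by
            apply mul_le_mul_of_nonneg_left _ hC
            have := hmid
            have e2 : ∀ n : ℤ, ((j:ℝ)+1) = ((j+1 : ℕ):ℝ) := by intro n; push_cast; ring
            calc ∑ n ∈ Finset.Icc N K, (2*((j:ℝ)+1)) * W m (j+1+1) n * ‖(discreteDeriv^[2*m-(j+1)] u) n‖^2
                = ∑ n ∈ Finset.Icc N K, (2*(((j+1:ℕ)):ℝ)) * W m ((j+1)+1) n * ‖(discreteDeriv^[2*m-(j+1)] u) n‖^2 := by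
                  apply Finset.sum_congr rfl
                  intro n _
                  rw [← e2 n]
              _ ≤ ∑ n ∈ Finset.Icc N K, W m (j+1) n * ‖(discreteDeriv^[2*m-(j+1)] u) n - (discreteDeriv^[2*m-(j+1)] u) (n-1)‖^2 := hmid
              _ = ∑ n ∈ Finset.Icc N K, W m (j+1) n * ‖(discreteDeriv^[2*m-j] u) n‖^2 := by
                  apply Finset.sum_congr rfl
                  intro n _
                  rw [e n]
        _ ≤ ∑ n ∈ Finset.Icc N K, ‖(discreteDeriv^[2*m+1] u) n‖^2 := ih
  -- instantiate j = 2m-1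
  have hlast := chain (2*m-1) le_rfl
  have hfin := chain_final m hm N K hN u (fun n hn => h0 n (by omega)) (hupper K (by omega))
  have hsub2 : 2*m - (2*m-1) = 1 := by omega
  have hone : ∀ n : ℤ, (discreteDeriv^[1] u) n = u n - u (n-1) := by
    intro n
    rw [Function.iterate_one]
    rfl
  have hC2 : (0:ℝ) ≤ (4:ℝ)⁻¹ * (∏ l ∈ range (2*m-1), (2*((l:ℝ)+1))) := by
    apply mul_nonneg (by norm_num)
    apply Finset.prod_nonneg
    intro l _
    positivity
  have key : (4:ℝ)⁻¹ * (∏ l ∈ range (2*m-1), (2*((l:ℝ)+1))) * (4*(m:ℝ)) *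
      ∑ n ∈ Finset.Icc N K, (((n:ℝ))^(4*m+2))⁻¹ * ‖u n‖^2
      ≤ ∑ n ∈ Finset.Icc N K, ‖(discreteDeriv^[2*m+1] u) n‖^2 := by
    calc (4:ℝ)⁻¹ * (∏ l ∈ range (2*m-1), (2*((l:ℝ)+1))) * (4*(m:ℝ)) *
        ∑ n ∈ Finset.Icc N K, (((n:ℝ))^(4*m+2))⁻¹ * ‖u n‖^2
        = ((4:ℝ)⁻¹ * (∏ l ∈ range (2*m-1), (2*((l:ℝ)+1)))) *
          ∑ n ∈ Finset.Icc N K, (4*(m:ℝ)) * (((n:ℝ))^(4*m+2))⁻¹ * ‖u n‖^2 := by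
          rw [Finset.mul_sum, Finset.mul_sum]
          apply Finset.sum_congr rfl
          intro n _
          ring
      _ ≤ ((4:ℝ)⁻¹ * (∏ l ∈ range (2*m-1), (2*((l:ℝ)+1)))) *
          ∑ n ∈ Finset.Icc N K, W m (2*m) n * ‖u n - u (n-1)‖^2 := by
          exact mul_le_mul_of_nonneg_left hfin hC2
      _ = ((4:ℝ)⁻¹ * (∏ l ∈ range (2*m-1), (2*((l:ℝ)+1)))) *
          ∑ n ∈ Finset.Icc N K, W m ((2*m-1)+1) n * ‖(discreteDeriv^[2*m-(2*m-1)] u) n‖^2 := by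
          congr 1
          apply Finset.sum_congr rfl
          intro n _
          rw [hsub2, hone n]
          congr 2
          omega
      _ ≤ ∑ n ∈ Finset.Icc N K, ‖(discreteDeriv^[2*m+1] u) n‖^2 := hlast
  -- constant arithmetic
  have hconst : (2:ℝ)^(2*(m:ℤ)-2) * (Nat.factorial (2*m))
      = (4:ℝ)⁻¹ * (∏ l ∈ range (2*m-1), (2*((l:ℝ)+1))) * (4*(m:ℝ)) := by
    have e1 : (∏ l ∈ range (2*m-1), (2*((l:ℝ)+1))) * (4*(m:ℝ))
        = ∏ l ∈ range (2*m), (2*((l:ℝ)+1)) := by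
      have hps := Finset.prod_range_succ (fun l : ℕ => 2*((l:ℝ)+1)) (2*m-1)
      have hrange : 2*m-1+1 = 2*m := by omega
      rw [hrange] at hps
      have hcast : ((2*m-1 : ℕ):ℝ) + 1 = 2*(m:ℝ) := by
        have h1 : (1:ℕ) ≤ 2*m := by omega
        push_cast [Nat.cast_sub h1]
        ring
      rw [hps, hcast]
      ring
    have e2 := prod_const_fact (2*m)
    have e3 : (2:ℝ)^(2*(m:ℤ)-2) = 4⁻¹ * 2^(2*m) := by
      have h1 : (2*(m:ℤ)-2) = ((2*m-2 : ℕ):ℤ) := by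
        push_cast [Nat.cast_sub (by omega : 2 ≤ 2*m)]
        ring
      rw [h1, zpow_natCast]
      have h2 : 2*m = (2*m-2)+2 := by omega
      rw [h2]
      have h3 : 2*m - 2 = (2*m-2+2) - 2 := by omega
      rw [← h3, pow_add]
      norm_num
      ring
    calc (2:ℝ)^(2*(m:ℤ)-2) * (Nat.factorial (2*m))
        = 4⁻¹ * (2^(2*m) * (Nat.factorial (2*m) : ℝ)) := by rw [e3]; ring
      _ = 4⁻¹ * (∏ l ∈ range (2*m), (2*((l:ℝ)+1))) := by rw [e2]
      _ = (4:ℝ)⁻¹ * (∏ l ∈ range (2*m-1), (2*((l:ℝ)+1))) * (4*(m:ℝ)) := by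
          rw [← e1]; ring
  rw [hconst]
  exact key

lemma tsum_shift_eq (g : ℤ → ℝ) (K : ℤ) (hK : 1 ≤ K) (hg : ∀ n : ℤ, K < n → g n = 0) :
    ∑' k : ℕ, g ((k:ℤ)+1) = ∑ n ∈ Finset.Icc (1:ℤ) K, g n := by
  have h1 : ∀ k : ℕ, k ∉ Finset.range K.toNat → g ((k:ℤ)+1) = 0 := by
    intro k hk
    apply hg
    simp only [Finset.mem_range, not_lt] at hk
    have : K ≤ (k:ℤ) := Int.toNat_le.mp hk
    omega
  rw [tsum_eq_sum h1]
  apply Finset.sum_nbij' (i := fun (k:ℕ) => (k:ℤ)+1) (j := fun (n:ℤ) => (n-1).toNat)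
  · intro a ha
    simp only [Finset.mem_range] at ha
    simp only [Finset.mem_Icc]
    constructor
    · omega
    · have : (a:ℤ) < K.toNat := by exact_mod_cast ha
      omega
  · intro a ha
    simp only [Finset.mem_Icc] at ha
    simp only [Finset.mem_range]
    have h2 : ((a-1).toNat : ℤ) = a - 1 := Int.toNat_of_nonneg (by omega)
    have h3 : ((K).toNat : ℤ) = K := Int.toNat_of_nonneg (by omega)
    omega
  · intro a _
    simp
  · intro a ha
    simp only [Finset.mem_Icc] at ha
    have h2 : ((a-1).toNat : ℤ) = a - 1 := Int.toNat_of_nonneg (by omega)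
    omega
  · intro a _
    rfl

theorem higher_order_hardy_odd
    (m : ℕ) (hm : 1 ≤ m) (u : ℤ → ℂ)
    (hu : (Function.support u).Finite)
    (h0 : ∀ n : ℤ, n ≤ 2 * (m : ℤ) → u n = 0) :
    ∑' n : ℕ, ‖(discreteDeriv (discreteLaplacian^[m] u)) ((n : ℤ) + 1)‖ ^ 2 ≥
      (2 : ℝ) ^ (2 * (m : ℤ) - 2) * (Nat.factorial (2 * m)) *
        ∑' n : ℕ, ‖u ((n : ℤ) + 1)‖ ^ 2 / ((n : ℝ) + 1) ^ (4 * m + 2) := by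
  obtain ⟨b, hb⟩ := hu.bddAbove
  have hbz : ∀ n : ℤ, b < n → u n = 0 := by
    intro n hn
    by_contra hne
    exact absurd (hb (Function.mem_support.mpr hne)) (by omega)
  set B : ℤ := max (b+1) (2*(m:ℤ)+2) with hB
  have hupperB : ∀ n, B ≤ n → u n = 0 := by
    intro n hn
    apply hbz
    have := le_max_left (b+1) (2*(m:ℤ)+2)
    omega
  set N : ℤ := 2*(m:ℤ)+1 with hNdef
  set K : ℤ := B + 2*(m:ℤ) + 1 with hKdef
  have hBge : 2*(m:ℤ)+2 ≤ B := le_max_right _ _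
  have hK1 : 1 ≤ K := by omega
  have hNK : N ≤ K := by omega
  -- RHS conversion
  set g : ℤ → ℝ := fun n => ‖u n‖^2 / (n:ℝ)^(4*m+2) with hgdef
  have hgzero : ∀ n : ℤ, K < n → g n = 0 := by
    intro n hn
    simp only [hgdef, hupperB n (by omega)]
    simp
  have hR1 : ∑' k : ℕ, ‖u ((k:ℤ)+1)‖^2 / ((k:ℝ)+1)^(4*m+2) = ∑ n ∈ Finset.Icc (1:ℤ) K, g n := by
    rw [← tsum_shift_eq g K hK1 hgzero]
    apply tsum_congr
    intro k
    simp only [hgdef]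
    have : (((k:ℤ)+1 : ℤ):ℝ) = (k:ℝ)+1 := by push_cast; ring
    rw [this]
  have hR2 : ∑ n ∈ Finset.Icc (1:ℤ) K, g n = ∑ n ∈ Finset.Icc N K, g n := by
    symm
    apply Finset.sum_subset (Finset.Icc_subset_Icc (by omega) le_rfl)
    intro x hx hx'
    simp only [Finset.mem_Icc] at hx hx'
    have : u x = 0 := h0 x (by omega)
    simp only [hgdef, this]
    simp
  have hR3 : ∑ n ∈ Finset.Icc N K, g n
      = ∑ n ∈ Finset.Icc N K, (((n:ℝ))^(4*m+2))⁻¹ * ‖u n‖^2 := by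
    apply Finset.sum_congr rfl
    intro n _
    simp only [hgdef]
    rw [div_eq_mul_inv]
    ring
  -- LHS conversion
  set h : ℤ → ℝ := fun n => ‖discreteDeriv (discreteLaplacian^[m] u) n‖^2 with hhdef
  have hhzero : ∀ n : ℤ, K < n → h n = 0 := by
    intro n hn
    simp only [hhdef, DlapIter u m n]
    have : (discreteDeriv^[2*m+1] u) (n + m) = 0 := by
      apply supp_upper u B hupperB
      push_cast
      omega
    rw [this]
    simp
  have hL1 : ∑' k : ℕ, ‖discreteDeriv (discreteLaplacian^[m] u) ((k:ℤ)+1)‖^2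
      = ∑ n ∈ Finset.Icc (1:ℤ) K, h n := tsum_shift_eq h K hK1 hhzero
  have hL2 : ∑ n ∈ Finset.Icc (1:ℤ) K, h n
      = ∑ n ∈ Finset.Icc (1+(m:ℤ)) (K+(m:ℤ)), ‖(discreteDeriv^[2*m+1] u) n‖^2 := by
    rw [← Finset.map_add_right_Icc 1 K (m:ℤ), Finset.sum_map]
    apply Finset.sum_congr rfl
    intro n _
    simp only [addRightEmbedding_apply, hhdef]
    rw [DlapIter u m n]
  have hL3 : ∑ n ∈ Finset.Icc (1+(m:ℤ)) (K+(m:ℤ)), ‖(discreteDeriv^[2*m+1] u) n‖^2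
      = ∑ n ∈ Finset.Icc N K, ‖(discreteDeriv^[2*m+1] u) n‖^2 := by
    symm
    apply Finset.sum_subset (Finset.Icc_subset_Icc (by omega) (by omega))
    intro x hx hx'
    simp only [Finset.mem_Icc] at hx hx'
    rcases lt_or_ge x N with hc | hc
    · rw [supp_lower u (2*(m:ℤ)) h0 (2*m+1) x (by omega)]
      simp
    · have hxK : K < x := by omega
      rw [supp_upper u B hupperB (2*m+1) x (by push_cast; omega)]
      simp
  rw [ge_iff_le, hR1, hR2, hR3, hL1, hL2, hL3]
  exact core m hm u N K B hNdef h0 hupperB (by omega)
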